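/- Let n ≥ 1, let O ⊆ ℂ be open and connected, and let u : ℂ → ℂⁿ be twice continuously differentiable on O (regarding ℂ ≅ ℝ², with ∂₁, ∂₂ the partial derivatives in the real and imaginary coordinate directions). Assume on O: isotropy ⟨J ∂₁u, ∂₂u⟩ = 0 and Hamiltonian stationarity ⟨J u, ∂₁∂₁u + ∂₂∂₂u⟩ = 0. Let Z = { w ∈ O : ⟨J u(w), ∂₁u(w)⟩ = 0 and ⟨J u(w), ∂₂u(w)⟩ = 0 } be the set of Legendrian points. Then either Z = O, or every point of Z is an isolated point of Z. -/

import Mathlib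

/-- The standard complex structure `J x = i • x` on `ℂⁿ`. -/
noncomputable def Jc {n : ℕ} (x : EuclideanSpace ℂ (Fin n)) : EuclideanSpace ℂ (Fin n) :=
  Complex.I • x

/-- The real inner product `⟨x, y⟩ = Re ⟪x, y⟫` on `ℂⁿ`. -/
noncomputable def rinner {n : ℕ} (x y : EuclideanSpace ℂ (Fin n)) : ℝ :=
  (inner ℂ x y : ℂ).re

/-- Partial derivative in the real coordinate direction for a map on `ℂ ≅ ℝ²`. -/
noncomputable def pd1 {E : Type*} [NormedAddCommGroup E] [NormedSpace ℝ E]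
    (f : ℂ → E) (w : ℂ) : E :=
  fderiv ℝ f w 1

/-- Partial derivative in the imaginary coordinate direction for a map on `ℂ ≅ ℝ²`. -/
noncomputable def pd2 {E : Type*} [NormedAddCommGroup E] [NormedSpace ℝ E]
    (f : ℂ → E) (w : ℂ) : E :=
  fderiv ℝ f w Complex.I

private lemma rinner_Jc_eq_im {n : ℕ} (x y : EuclideanSpace ℂ (Fin n)) :
    rinner (Jc x) y = (inner ℂ x y : ℂ).im := by
  simp [rinner, Jc, inner_smul_left, Complex.mul_re]

/-- Two real-linear continuous maps on `ℂ` agreeing at `1` and `I` agree. -/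
private lemma clm_ext_complex {F : Type*} [NormedAddCommGroup F] [NormedSpace ℝ F]
    {f g : ℂ →L[ℝ] F} (h1 : f 1 = g 1) (hI : f Complex.I = g Complex.I) : f = g := by
  ext z
  have hz : z = z.re • (1 : ℂ) + z.im • Complex.I := by
    simp [Complex.real_smul, Complex.ext_iff]
  rw [hz, map_add, map_add, map_smul, map_smul, map_smul, map_smul, h1, hI]

private lemma im_inner_symm {n : ℕ} (x y : EuclideanSpace ℂ (Fin n)) :
    (inner ℂ x y : ℂ).im = -(inner ℂ y x : ℂ).im := by
  rw [← inner_conj_symm x y, Complex.conj_im]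

private lemma im_inner_self {n : ℕ} (x : EuclideanSpace ℂ (Fin n)) :
    (inner ℂ x x : ℂ).im = 0 := by
  have := im_inner_symm x x; linarith

set_option maxHeartbeats 1000000 in
/-- For a `C²` isotropic map `u : ℂ → ℂⁿ` on an open connected set `O` whose cone is
Hamiltonian stationary, the set `Z` of Legendrian points is either all of `O` or consists
only of isolated points. -/
theorem legendrian_points_dichotomy (n : ℕ) (hn : 1 ≤ n)
    (O : Set ℂ) (hO : IsOpen O) (hconn : IsConnected O)
    (u : ℂ → EuclideanSpace ℂ (Fin n))
    (hu : ContDiffOn ℝ 2 u O)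
    (hiso : ∀ w ∈ O, rinner (Jc (pd1 u w)) (pd2 u w) = 0)
    (hHS : ∀ w ∈ O, rinner (Jc (u w)) (pd1 (pd1 u) w + pd2 (pd2 u) w) = 0)
    (Z : Set ℂ)
    (hZ : Z = {w ∈ O | rinner (Jc (u w)) (pd1 u w) = 0 ∧ rinner (Jc (u w)) (pd2 u w) = 0}) :
    Z = O ∨ ∀ w ∈ Z, ∃ ε > 0, ∀ z ∈ Z, dist z w < ε → z = w := by
  classical
  set u' : ℂ → (ℂ →L[ℝ] EuclideanSpace ℂ (Fin n)) := fderiv ℝ u with hu'def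
  have hu'C1 : ContDiffOn ℝ 1 u' O := ContDiffOn.fderiv_of_isOpen (m := 1) hu hO (by norm_num)
  set g : ℂ → ℂ := fun x =>
      (((inner ℂ (u x) (u' x 1) : ℂ).im : ℂ)
        - Complex.I * ((inner ℂ (u x) (u' x Complex.I) : ℂ).im : ℂ)) with hgdef
  -- pointwise description of Z via g
  have hpd1 : ∀ x, pd1 u x = u' x 1 := fun x => rfl
  have hpd2 : ∀ x, pd2 u x = u' x Complex.I := fun x => rfl
  have hZg : ∀ x ∈ O, (x ∈ Z ↔ g x = 0) := by
    intro x hx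
    rw [hZ]
    simp only [Set.mem_setOf_eq, hx, true_and, rinner_Jc_eq_im, hpd1, hpd2, hgdef]
    constructor
    · rintro ⟨h1, h2⟩; rw [h1, h2]; norm_num
    · intro h
      have := Complex.ext_iff.1 h
      constructor
      · simpa using this.1
      · have := this.2
        simpa using this
  -- differentiability of g over ℂ
  have hdu : ∀ y ∈ O, HasFDerivAt u (u' y) y := fun y hy =>
    ((hu.differentiableOn (by norm_num)).differentiableAt (hO.mem_nhds hy)).hasFDerivAt
  have key : ∀ w ∈ O, DifferentiableAt ℂ g w := by
    intro w hw
    have hwmem : O ∈ nhds w := hO.mem_nhds hw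
    set u'' : ℂ →L[ℝ] ℂ →L[ℝ] EuclideanSpace ℂ (Fin n) := fderiv ℝ u' w with hu''def
    have hdu' : HasFDerivAt u' u'' w :=
      ((hu'C1.differentiableOn one_ne_zero).differentiableAt hwmem).hasFDerivAt
    have hsymm : ∀ v v' : ℂ, u'' v v' = u'' v' v := fun v v' =>
      second_derivative_symmetric_of_eventually
        (Filter.eventually_of_mem hwmem fun y hy => hdu y hy) hdu' v v'
    set P1 : (ℂ →L[ℝ] EuclideanSpace ℂ (Fin n)) →L[ℝ] EuclideanSpace ℂ (Fin n) := ContinuousLinearMap.apply ℝ (EuclideanSpace ℂ (Fin n)) (1 : ℂ) with hP1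
    set PI : (ℂ →L[ℝ] EuclideanSpace ℂ (Fin n)) →L[ℝ] EuclideanSpace ℂ (Fin n) := ContinuousLinearMap.apply ℝ (EuclideanSpace ℂ (Fin n)) (Complex.I) with hPI
    have hp1 : HasFDerivAt (fun x => u' x (1 : ℂ)) (P1.comp u'') w :=
      P1.hasFDerivAt.comp w hdu'
    have hpI : HasFDerivAt (fun x => u' x Complex.I) (PI.comp u'') w :=
      PI.hasFDerivAt.comp w hdu'
    -- derivatives of the two inner products
    have hA : HasFDerivAt (fun x => (inner ℂ (u x) (u' x 1) : ℂ))
        ((fderivInnerCLM ℂ (u w, u' w 1)).comp ((u' w).prod (P1.comp u''))) w :=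
      (hdu w hw).inner ℂ hp1
    have hB : HasFDerivAt (fun x => (inner ℂ (u x) (u' x Complex.I) : ℂ))
        ((fderivInnerCLM ℂ (u w, u' w Complex.I)).comp ((u' w).prod (PI.comp u''))) w :=
      (hdu w hw).inner ℂ hpI
    set LA : ℂ →L[ℝ] ℂ :=
      (fderivInnerCLM ℂ (u w, u' w 1)).comp ((u' w).prod (P1.comp u'')) with hLA
    set LB : ℂ →L[ℝ] ℂ :=
      (fderivInnerCLM ℂ (u w, u' w Complex.I)).comp ((u' w).prod (PI.comp u'')) with hLB
    set LA' : ℂ →L[ℝ] ℂ := Complex.ofRealCLM.comp (Complex.imCLM.comp LA) with hLA'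
    set LB' : ℂ →L[ℝ] ℂ := Complex.ofRealCLM.comp (Complex.imCLM.comp LB) with hLB'
    have hA' : HasFDerivAt (fun x => ((inner ℂ (u x) (u' x 1) : ℂ).im : ℂ)) LA' w :=
      (Complex.ofRealCLM.hasFDerivAt.comp w (Complex.imCLM.hasFDerivAt.comp w hA))
    have hB' : HasFDerivAt (fun x => ((inner ℂ (u x) (u' x Complex.I) : ℂ).im : ℂ)) LB' w :=
      (Complex.ofRealCLM.hasFDerivAt.comp w (Complex.imCLM.hasFDerivAt.comp w hB))
    set L : ℂ →L[ℝ] ℂ := LA' - Complex.I • LB' with hL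
    have hgL : HasFDerivAt g L w := hA'.sub (hB'.const_mul Complex.I)
    -- values of L on the basis
    have hLapp : ∀ v : ℂ, L v = ((inner ℂ (u w) (u'' v 1) : ℂ).im : ℂ)
        + ((inner ℂ (u' w v) (u' w 1) : ℂ).im : ℂ)
        - Complex.I * (((inner ℂ (u w) (u'' v Complex.I) : ℂ).im : ℂ)
        + ((inner ℂ (u' w v) (u' w Complex.I) : ℂ).im : ℂ)) := by
      intro v
      simp only [hL, hLA', hLB', hLA, hLB, hP1, hPI,
        ContinuousLinearMap.sub_apply, ContinuousLinearMap.smul_apply,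
        ContinuousLinearMap.coe_comp', Function.comp_apply,
        Complex.ofRealCLM_apply, Complex.imCLM_apply,
        fderivInnerCLM_apply, ContinuousLinearMap.prod_apply,
        ContinuousLinearMap.apply_apply, Complex.add_im, smul_eq_mul,
        Complex.ofReal_add, mul_add]
    -- the two PDE hypotheses, in terms of u''
    have hiso' : (inner ℂ (u' w 1) (u' w Complex.I) : ℂ).im = 0 := by
      have := hiso w hw
      rwa [rinner_Jc_eq_im, hpd1, hpd2] at this
    have hisoflip : (inner ℂ (u' w Complex.I) (u' w 1) : ℂ).im = 0 := by
      rw [im_inner_symm, hiso', neg_zero]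
    have hpd11 : pd1 (pd1 u) w = u'' 1 1 := by
      have : fderiv ℝ (fun x => u' x (1:ℂ)) w = P1.comp u'' := hp1.fderiv
      show fderiv ℝ (pd1 u) w 1 = _
      have hfun : pd1 u = fun x => u' x (1:ℂ) := rfl
      rw [hfun, this]
      simp only [hP1, ContinuousLinearMap.coe_comp', Function.comp_apply,
        ContinuousLinearMap.apply_apply]
    have hpd22 : pd2 (pd2 u) w = u'' Complex.I Complex.I := by
      have : fderiv ℝ (fun x => u' x Complex.I) w = PI.comp u'' := hpI.fderiv
      show fderiv ℝ (pd2 u) w Complex.I = _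
      have hfun : pd2 u = fun x => u' x Complex.I := rfl
      rw [hfun, this]
      simp only [hPI, ContinuousLinearMap.coe_comp', Function.comp_apply,
        ContinuousLinearMap.apply_apply]
    have hHS' : (inner ℂ (u w) (u'' 1 1) : ℂ).im
        + (inner ℂ (u w) (u'' Complex.I Complex.I) : ℂ).im = 0 := by
      have := hHS w hw
      rw [rinner_Jc_eq_im, hpd11, hpd22] at this
      rwa [inner_add_right, Complex.add_im] at this
    -- Cauchy–Riemann: L I = I * L 1
    have hCR : L Complex.I = L 1 * Complex.I := by
      rw [hLapp 1, hLapp Complex.I]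
      rw [hsymm Complex.I 1]
      have h11 : (inner ℂ (u' w 1) (u' w 1) : ℂ).im = 0 := im_inner_self _
      have hII : (inner ℂ (u' w Complex.I) (u' w Complex.I) : ℂ).im = 0 := im_inner_self _
      have hs : (inner ℂ (u w) (u'' Complex.I Complex.I) : ℂ).im
          = -(inner ℂ (u w) (u'' 1 1) : ℂ).im := by linarith [hHS']
      rw [h11, hII, hiso', hisoflip, hs]
      push_cast
      ring_nf
      rw [Complex.I_sq]
      ring
    -- conclude complex differentiability
    have hreal : DifferentiableAt ℝ g w := hgL.differentiableAt
    rw [differentiableAt_iff_restrictScalars ℝ hreal]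
    refine ⟨L 1 • (1 : ℂ →L[ℂ] ℂ), ?_⟩
    rw [hgL.fderiv]
    apply clm_ext_complex
    · simp
    · simp only [ContinuousLinearMap.coe_restrictScalars',
        ContinuousLinearMap.smul_apply, ContinuousLinearMap.one_apply]
      rw [hCR]; simp [smul_eq_mul, mul_comm]
  -- analytic dichotomy
  have hgdiff : DifferentiableOn ℂ g O := fun w hw => (key w hw).differentiableWithinAt
  have hg_an : AnalyticOnNhd ℂ g O := hgdiff.analyticOnNhd hO
  by_cases hc : ∃ w ∈ O, ∀ᶠ z in nhds w, g z = 0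
  · left
    obtain ⟨w₀, hw₀, hev⟩ := hc
    have hzero : Set.EqOn g 0 O :=
      hg_an.eqOn_zero_of_preconnected_of_eventuallyEq_zero hconn.isPreconnected hw₀ hev
    apply Set.eq_of_subset_of_subset
    · rw [hZ]; exact fun x hx => hx.1
    · intro x hx
      exact (hZg x hx).2 (hzero hx)
  · right
    intro w hwZ
    have hwO : w ∈ O := by rw [hZ] at hwZ; exact hwZ.1
    have hgw : g w = 0 := (hZg w hwO).1 hwZ
    rcases (hg_an w hwO).eventually_eq_zero_or_eventually_ne_zero with h | h
    · exact absurd ⟨w, hwO, h⟩ hc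
    · rw [eventually_nhdsWithin_iff] at h
      rw [Metric.eventually_nhds_iff] at h
      obtain ⟨ε, hε, hball⟩ := h
      refine ⟨ε, hε, fun z hz hdist => ?_⟩
      by_contra hne
      have hzO : z ∈ O := by rw [hZ] at hz; exact hz.1
      exact hball hdist (Set.mem_compl_singleton_iff.2 hne) ((hZg z hzO).1 hz)
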